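/- For all N ≥ 3, the largest cardinality of a Sidon system of 2-element subsets of {1,…,N} equals exactly 2N - 3. -/

import Mathlib

open Finset Pointwise

private lemma add_pair (a b u v : ℤ) :
    ({a, b} : Finset ℤ) + {u, v} = {a + u, a + v, b + u, b + v} := by
  ext t
  simp only [Finset.mem_add, Finset.mem_insert, Finset.mem_singleton]
  constructor
  · rintro ⟨y, (rfl | rfl), z, (rfl | rfl), rfl⟩ <;> tauto
  · rintro (rfl | rfl | rfl | rfl)
    exacts [⟨a, Or.inl rfl, u, Or.inl rfl, rfl⟩,
      ⟨a, Or.inl rfl, v, Or.inr rfl, rfl⟩,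
      ⟨b, Or.inr rfl, u, Or.inl rfl, rfl⟩,
      ⟨b, Or.inr rfl, v, Or.inr rfl, rfl⟩]

private lemma sum_eq_fwd {a b u v x y z w : ℤ} (h1 : a < b) (h2 : u < v) (h3 : x < y)
    (h4 : z < w) (h : ({a, b} : Finset ℤ) + {u, v} = {x, y} + {z, w}) :
    a + u = x + z ∧ ((b - a = y - x ∧ v - u = w - z) ∨ (b - a = w - z ∧ v - u = y - x)) := by
  rw [add_pair, add_pair] at h
  have m1 : a + u ∈ ({x + z, x + w, y + z, y + w} : Finset ℤ) := h ▸ (by simp)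
  have m2 : a + v ∈ ({x + z, x + w, y + z, y + w} : Finset ℤ) := h ▸ (by simp)
  have m3 : b + u ∈ ({x + z, x + w, y + z, y + w} : Finset ℤ) := h ▸ (by simp)
  have m4 : b + v ∈ ({x + z, x + w, y + z, y + w} : Finset ℤ) := h ▸ (by simp)
  have n1 : x + z ∈ ({a + u, a + v, b + u, b + v} : Finset ℤ) := h ▸ (by simp)
  have n2 : x + w ∈ ({a + u, a + v, b + u, b + v} : Finset ℤ) := h ▸ (by simp)
  have n3 : y + z ∈ ({a + u, a + v, b + u, b + v} : Finset ℤ) := h ▸ (by simp)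
  have n4 : y + w ∈ ({a + u, a + v, b + u, b + v} : Finset ℤ) := h ▸ (by simp)
  simp only [Finset.mem_insert, Finset.mem_singleton] at m1 m2 m3 m4 n1 n2 n3 n4
  omega

private lemma sum_eq_bwd {a u x z d e f g : ℤ} (h : a + u = x + z)
    (hd : (d = f ∧ e = g) ∨ (d = g ∧ e = f)) :
    ({a, a + d} : Finset ℤ) + {u, u + e} = {x, x + f} + {z, z + g} := by
  rw [add_pair, add_pair]
  ext t
  simp only [Finset.mem_insert, Finset.mem_singleton]
  omega

private lemma pair_inj {a b c d : ℤ} (h1 : a < b) (h2 : c < d)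
    (h : ({a, b} : Finset ℤ) = {c, d}) : a = c ∧ b = d := by
  have m1 : a ∈ ({c, d} : Finset ℤ) := h ▸ (by simp)
  have m2 : b ∈ ({c, d} : Finset ℤ) := h ▸ (by simp)
  have n1 : c ∈ ({a, b} : Finset ℤ) := h ▸ (by simp)
  simp only [Finset.mem_insert, Finset.mem_singleton] at m1 m2 n1
  omega

private lemma core {N a1 d1 a2 d2 a3 d3 a4 d4 : ℤ}
    (q1 : 0 < d1 ∧ (a1 = 1 ∨ (a1 + d1 = N ∧ 2 ≤ a1)) ∧ a1 + d1 ≤ N ∧ 1 ≤ a1)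
    (q2 : 0 < d2 ∧ (a2 = 1 ∨ (a2 + d2 = N ∧ 2 ≤ a2)) ∧ a2 + d2 ≤ N ∧ 1 ≤ a2)
    (q3 : 0 < d3 ∧ (a3 = 1 ∨ (a3 + d3 = N ∧ 2 ≤ a3)) ∧ a3 + d3 ≤ N ∧ 1 ≤ a3)
    (q4 : 0 < d4 ∧ (a4 = 1 ∨ (a4 + d4 = N ∧ 2 ≤ a4)) ∧ a4 + d4 ≤ N ∧ 1 ≤ a4)
    (hs : a1 + a2 = a3 + a4)
    (hd : (d1 = d3 ∧ d2 = d4) ∨ (d1 = d4 ∧ d2 = d3)) :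
    (a1 = a3 ∧ d1 = d3 ∧ a2 = a4 ∧ d2 = d4) ∨ (a1 = a4 ∧ d1 = d4 ∧ a2 = a3 ∧ d2 = d3) := by
  omega

private noncomputable def mnI (A : Finset ℤ) : ℤ := if h : A.Nonempty then A.min' h else 0
private noncomputable def mxI (A : Finset ℤ) : ℤ := if h : A.Nonempty then A.max' h else 0
private noncomputable def df (A : Finset ℤ) : ℤ := mxI A - mnI A

private lemma card2_repr {A : Finset ℤ} (hA : A.card = 2) :
    mnI A < mxI A ∧ A = {mnI A, mxI A} ∧ mnI A ∈ A ∧ mxI A ∈ A := by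
  obtain ⟨a, b, hab, rfl⟩ := Finset.card_eq_two.mp hA
  wlog h : a < b generalizing a b
  · rw [Finset.pair_comm]
    exact this b a hab.symm (by rw [Finset.pair_comm]; exact hA) (by omega)
  have hne : ({a, b} : Finset ℤ).Nonempty := ⟨a, by simp⟩
  have hmn : mnI {a, b} = a := by
    rw [mnI, dif_pos hne]
    have h1 := Finset.min'_le {a, b} a (by simp)
    have h2 : ({a, b} : Finset ℤ).min' hne ∈ ({a, b} : Finset ℤ) := Finset.min'_mem _ _
    simp only [Finset.mem_insert, Finset.mem_singleton] at h2
    omega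
  have hmx : mxI {a, b} = b := by
    rw [mxI, dif_pos hne]
    have h1 := Finset.le_max' {a, b} b (by simp)
    have h2 : ({a, b} : Finset ℤ).max' hne ∈ ({a, b} : Finset ℤ) := Finset.max'_mem _ _
    simp only [Finset.mem_insert, Finset.mem_singleton] at h2
    omega
  refine ⟨by omega, by rw [hmn, hmx], by simp [hmn], by simp [hmx]⟩

theorem F2_eq (N : ℕ) (hN : 3 ≤ N) :
    IsGreatest {n : ℕ | ∃ 𝒜 : Finset (Finset ℤ),
      (∀ A ∈ 𝒜, A ⊆ Finset.Icc (1 : ℤ) N ∧ A.card = 2) ∧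
      (∀ A ∈ 𝒜, ∀ B ∈ 𝒜, ∀ U ∈ 𝒜, ∀ V ∈ 𝒜,
        A + B = U + V → ({A, B} : Finset (Finset ℤ)) = {U, V}) ∧
      𝒜.card = n} (2 * N - 3) := by
  have hNZ : (3:ℤ) ≤ N := by exact_mod_cast hN
  constructor
  · -- membership: the construction
    refine ⟨(Finset.Icc (2:ℤ) N).image (fun k => ({1, k} : Finset ℤ)) ∪
      (Finset.Icc (2:ℤ) (N - 1)).image (fun k => ({k, (N:ℤ)} : Finset ℤ)), ?_, ?_, ?_⟩
    · rintro A hA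
      simp only [Finset.mem_union, Finset.mem_image, Finset.mem_Icc] at hA
      rcases hA with ⟨k, hk, rfl⟩ | ⟨k, hk, rfl⟩
      · constructor
        · intro t ht
          simp only [Finset.mem_insert, Finset.mem_singleton] at ht
          simp only [Finset.mem_Icc]; omega
        · rw [Finset.card_insert_of_notMem (by simp; omega), Finset.card_singleton]
      · constructor
        · intro t ht
          simp only [Finset.mem_insert, Finset.mem_singleton] at ht
          simp only [Finset.mem_Icc]; omega
        · rw [Finset.card_insert_of_notMem (by simp; omega), Finset.card_singleton]
    · -- Sidon property
      have repr : ∀ A ∈ (Finset.Icc (2:ℤ) N).image (fun k => ({1, k} : Finset ℤ)) ∪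
          (Finset.Icc (2:ℤ) (N - 1)).image (fun k => ({k, (N:ℤ)} : Finset ℤ)),
          ∃ a d : ℤ, A = {a, a + d} ∧
            (0 < d ∧ (a = 1 ∨ (a + d = N ∧ 2 ≤ a)) ∧ a + d ≤ N ∧ 1 ≤ a) := by
        intro A hA
        simp only [Finset.mem_union, Finset.mem_image, Finset.mem_Icc] at hA
        rcases hA with ⟨k, hk, rfl⟩ | ⟨k, hk, rfl⟩
        · exact ⟨1, k - 1, by norm_num, by omega⟩
        · exact ⟨k, N - k, by norm_num, by omega⟩
      intro A hA B hB U hU V hV hsum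
      obtain ⟨a1, d1, rfl, q1⟩ := repr A hA
      obtain ⟨a2, d2, rfl, q2⟩ := repr B hB
      obtain ⟨a3, d3, rfl, q3⟩ := repr U hU
      obtain ⟨a4, d4, rfl, q4⟩ := repr V hV
      obtain ⟨hs, hd⟩ := sum_eq_fwd (by omega) (by omega) (by omega) (by omega) hsum
      rcases core q1 q2 q3 q4 hs (by omega) with ⟨e1, e2, e3, e4⟩ | ⟨e1, e2, e3, e4⟩
      · rw [e1, e2, e3, e4]
      · rw [e1, e2, e3, e4, Finset.pair_comm]
    · -- cardinality
      have hc1 : ((Finset.Icc (2:ℤ) N).image (fun k => ({1, k} : Finset ℤ))).card = N - 1 := by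
        rw [Finset.card_image_of_injOn, Int.card_Icc]
        · omega
        · intro k hk k' hk' h
          simp only [Finset.coe_Icc, Set.mem_Icc] at hk hk'
          exact ((pair_inj (by omega) (by omega) h).2)
      have hc2 : ((Finset.Icc (2:ℤ) (N - 1)).image
          (fun k => ({k, (N:ℤ)} : Finset ℤ))).card = N - 2 := by
        rw [Finset.card_image_of_injOn, Int.card_Icc]
        · omega
        · intro k hk k' hk' h
          simp only [Finset.coe_Icc, Set.mem_Icc] at hk hk'
          exact ((pair_inj (by omega) (by omega) h).1)
      rw [Finset.card_union_of_disjoint, hc1, hc2]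
      · omega
      · rw [Finset.disjoint_left]
        rintro A hA hA'
        simp only [Finset.mem_image, Finset.mem_Icc] at hA hA'
        obtain ⟨k, hk, rfl⟩ := hA
        obtain ⟨k', hk', h⟩ := hA'
        exact absurd ((pair_inj (by omega) (by omega) h.symm).1) (by omega)
  · -- upper bound
    rintro n ⟨𝒜, h1, h2, rfl⟩
    classical
    have hrep : ∀ A ∈ 𝒜, A = {mnI A, mnI A + df A} ∧ 0 < df A ∧ 1 ≤ mnI A ∧
        mnI A + df A ≤ N := by
      intro A hA
      obtain ⟨hsub, hcard⟩ := h1 A hA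
      obtain ⟨hlt, heq, hmn, hmx⟩ := card2_repr hcard
      have h3 := hsub hmn
      have h4 := hsub hmx
      simp only [Finset.mem_Icc] at h3 h4
      rw [df]
      refine ⟨?_, by omega, by omega, by omega⟩
      simpa using heq
    -- key: Sidon in coordinates
    have key : ∀ A ∈ 𝒜, ∀ A' ∈ 𝒜, ∀ B ∈ 𝒜, ∀ B' ∈ 𝒜, df A = df A' → df B = df B' →
        mnI A + mnI B' = mnI A' + mnI B → A = A' ∨ A = B := by
      intro A hA A' hA' B hB B' hB' e1 e2 e3
      have hsum : A + B' = A' + B := by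
        rw [(hrep A hA).1, (hrep A' hA').1, (hrep B hB).1, (hrep B' hB').1]
        exact sum_eq_bwd e3 (Or.inl ⟨e1, e2.symm⟩)
      have := h2 A hA B' hB' A' hA' B hB hsum
      have hm : A ∈ ({A', B} : Finset (Finset ℤ)) := this ▸ (by simp)
      simpa only [Finset.mem_insert, Finset.mem_singleton] using hm
    set M : Finset (Finset ℤ) :=
      𝒜.filter (fun A => ∀ B ∈ 𝒜, df B = df A → mnI A ≤ mnI B) with hM
    have hMcard : M.card ≤ N - 1 := by
      have := Finset.card_le_card_of_injOn df
        (fun A hA => ?_) (fun A hA B hB e => ?_) (s := M) (t := Finset.Icc (1:ℤ) (N - 1))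
      · rw [Int.card_Icc] at this; omega
      · simp only [hM, Finset.mem_coe, Finset.mem_filter] at hA
        obtain ⟨_, _, _, _⟩ := hrep A hA.1
        simp only [Finset.mem_coe, Finset.mem_Icc]; omega
      · simp only [hM, Finset.coe_filter, Set.mem_setOf_eq] at hA hB
        have l1 := hA.2 B hB.1 (by omega)
        have l2 := hB.2 A hA.1 (by omega)
        have : mnI A = mnI B := by omega
        rw [(hrep A hA.1).1, (hrep B hB.1).1, this, e]
    have hRcard : (𝒜 \ M).card ≤ N - 2 := by
      set μ : Finset ℤ → ℤ := fun A =>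
        if h : ((𝒜.filter (fun B => df B = df A)).image mnI).Nonempty
        then ((𝒜.filter (fun B => df B = df A)).image mnI).min' h else 0 with hμ
      have hμ1 : ∀ A ∈ 𝒜, (∃ A₀ ∈ 𝒜, df A₀ = df A ∧ mnI A₀ = μ A) ∧
          (∀ B ∈ 𝒜, df B = df A → μ A ≤ mnI B) := by
        intro A hA
        have hne : ((𝒜.filter (fun B => df B = df A)).image mnI).Nonempty :=
          ⟨mnI A, Finset.mem_image_of_mem _ (Finset.mem_filter.mpr ⟨hA, rfl⟩)⟩
        constructor
        · have := Finset.min'_mem _ hne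
          rw [hμ]; simp only [dif_pos hne]
          obtain ⟨A₀, hA₀, hval⟩ := Finset.mem_image.mp this
          simp only [Finset.mem_filter] at hA₀
          exact ⟨A₀, hA₀.1, hA₀.2, hval⟩
        · intro B hB e
          rw [hμ]; simp only [dif_pos hne]
          exact Finset.min'_le _ _ (Finset.mem_image_of_mem _
            (Finset.mem_filter.mpr ⟨hB, e⟩))
      have := Finset.card_le_card_of_injOn (fun A => mnI A - μ A)
        (fun A hA => ?_) (fun A hA B hB e => ?_) (s := 𝒜 \ M) (t := Finset.Icc (1:ℤ) (N - 2))
      · rw [Int.card_Icc] at this; omega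
      · simp only [Finset.mem_coe, Finset.mem_sdiff, hM, Finset.mem_filter, not_and, not_forall] at hA
        obtain ⟨hA𝒜, hnm⟩ := hA
        obtain ⟨B, hB, e, hlt⟩ := hnm hA𝒜
        push_neg at hlt
        obtain ⟨⟨A₀, hA₀, e₀, hv₀⟩, hlb⟩ := hμ1 A hA𝒜
        have l1 := hlb B hB e
        obtain ⟨_, _, _, _⟩ := hrep A hA𝒜
        obtain ⟨_, _, _, _⟩ := hrep A₀ hA₀
        simp only [Finset.mem_coe, Finset.mem_Icc]
        constructor <;> omega
      · simp only [Finset.coe_sdiff, Set.mem_diff, Finset.mem_coe, hM,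
          Finset.mem_filter, not_and, not_forall] at hA hB
        obtain ⟨hA𝒜, hnmA⟩ := hA
        obtain ⟨hB𝒜, hnmB⟩ := hB
        obtain ⟨⟨A₀, hA₀, eA₀, hvA₀⟩, hlbA⟩ := hμ1 A hA𝒜
        obtain ⟨⟨B₀, hB₀, eB₀, hvB₀⟩, hlbB⟩ := hμ1 B hB𝒜
        simp only at e
        have e3 : mnI A + mnI B₀ = mnI A₀ + mnI B := by omega
        rcases key A hA𝒜 A₀ hA₀ B hB𝒜 B₀ hB₀ eA₀.symm eB₀.symm e3 with h | h
        · exfalso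
          obtain ⟨C, hC, eC, hltC⟩ := hnmA hA𝒜
          push_neg at hltC
          have l2 := hlbA C hC eC
          have l3 : mnI A₀ = μ A := hvA₀
          rw [← h] at l3
          omega
        · exact h
    have hsub : M ⊆ 𝒜 := Finset.filter_subset _ _
    have := Finset.card_sdiff_of_subset hsub
    have := Finset.card_le_card hsub
    omega
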